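/- The series 7/9 + ∑_{n≥2} (-1)ⁿ · 36/((2n-2)(2n-1)(2n)(((2n-1)²+4)² + 20)) converges to π/4. -/

import Mathlib

open Filter Finset Real

theorem madhava_series_third_correction :
    Tendsto (fun N : ℕ => 7 / 9 + ∑ n ∈ Finset.Icc 2 N,
        (-1 : ℝ) ^ n * 36 /
          ((2 * (n : ℝ) - 2) * (2 * (n : ℝ) - 1) * (2 * (n : ℝ)) *
            (((2 * (n : ℝ) - 1) ^ 2 + 4) ^ 2 + 20)))
      atTop (nhds (π / 4)) := by
  have key : ∀ N : ℕ, 1 ≤ N →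
      (7 / 9 + ∑ n ∈ Finset.Icc 2 N, (-1 : ℝ) ^ n * 36 /
          ((2 * (n : ℝ) - 2) * (2 * (n : ℝ) - 1) * (2 * (n : ℝ)) *
            (((2 * (n : ℝ) - 1) ^ 2 + 4) ^ 2 + 20)))
      = (∑ i ∈ Finset.range N, (-1 : ℝ) ^ i / (2 * i + 1))
        + (-1 : ℝ) ^ N * ((N : ℝ) ^ 2 + 1) / (4 * (N : ℝ) ^ 3 + 5 * N) := by
    intro N hN
    induction N with
    | zero => omega
    | succ N ih =>
      rcases Nat.lt_or_ge N 1 with h1 | h1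
      · interval_cases N
        norm_num
      · rw [Finset.sum_Icc_succ_top (by omega : 2 ≤ N + 1), Finset.sum_range_succ,
          ← add_assoc, ih h1]
        have hn : (1 : ℝ) ≤ (N : ℝ) := by exact_mod_cast h1
        push_cast
        have h2 : (2 : ℝ) * ((N : ℝ) + 1) - 2 ≠ 0 := by nlinarith
        have h3 : (2 : ℝ) * ((N : ℝ) + 1) - 1 ≠ 0 := by nlinarith
        have h4 : (2 : ℝ) * ((N : ℝ) + 1) ≠ 0 := by nlinarith
        have h5 : ((2 * ((N : ℝ) + 1) - 1) ^ 2 + 4) ^ 2 + 20 ≠ 0 := by positivity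
        have hc3 : (0 : ℝ) < (N : ℝ) ^ 3 := pow_pos (by linarith) 3
        have hc3' : (0 : ℝ) < ((N : ℝ) + 1) ^ 3 := pow_pos (by linarith) 3
        have h6 : (4 : ℝ) * N ^ 3 + 5 * N ≠ 0 := ne_of_gt (by linarith)
        have h7 : (4 : ℝ) * ((N : ℝ) + 1) ^ 3 + 5 * ((N : ℝ) + 1) ≠ 0 := ne_of_gt (by linarith)
        have h8 : (2 : ℝ) * N + 1 ≠ 0 := by nlinarith
        rw [pow_succ]
        have h9 : (N : ℝ) ≠ 0 := by linarith
        rw [show (2 : ℝ) * ((N : ℝ) + 1) - 2 = 2 * N by ring]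
        field_simp
        ring
  have hF : Tendsto (fun N : ℕ => ∑ i ∈ Finset.range N, (-1 : ℝ) ^ i / (2 * i + 1))
      atTop (nhds (π / 4)) := Real.tendsto_sum_pi_div_four
  have hg : Tendsto (fun N : ℕ => (-1 : ℝ) ^ N * ((N : ℝ) ^ 2 + 1) / (4 * (N : ℝ) ^ 3 + 5 * N))
      atTop (nhds 0) := by
    refine squeeze_zero_norm' ?_ tendsto_one_div_atTop_nhds_zero_nat
    · filter_upwards [eventually_ge_atTop 1] with N hN
      have hn : (1 : ℝ) ≤ (N : ℝ) := by exact_mod_cast hN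
      have hc3 : (0 : ℝ) < (N : ℝ) ^ 3 := pow_pos (by linarith) 3
      have h6 : (4 : ℝ) * N ^ 3 + 5 * N > 0 := by linarith
      rw [norm_eq_abs, abs_div, abs_mul, abs_pow, abs_neg, abs_one, one_pow, one_mul,
        abs_of_pos (by positivity : (0:ℝ) < (N : ℝ) ^ 2 + 1), abs_of_pos h6,
        div_le_div_iff₀ h6 (by linarith)]
      nlinarith
  have := hF.add hg
  rw [add_zero] at this
  refine Tendsto.congr' ?_ this
  filter_upwards [eventually_ge_atTop 1] with N hN
  exact (key N hN).symm
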